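/- Let q ≥ 2 and -q < d ≤ 0 with d ≠ 0 and d ≠ -q+1. Then every integer x has a representation x = Σ_{i=0}^{ℓ} x_i q^i with digits x_i ∈ {d, …, q+d-1}. -/
import Mathlib


/-- Every integer has a `(q,d)`-expansion when `q ≥ 2`, `-q < d ≤ 0`,
`d ≠ 0` and `d ≠ -q+1`. -/
theorem qd_expansion_exists (q d : ℤ) (hq : 2 ≤ q) (hd1 : -q < d) (hd2 : d ≤ 0)
    (hd3 : d ≠ 0) (hd4 : d ≠ -q + 1) (x : ℤ) :
    ∃ (ℓ : ℕ) (c : ℕ → ℤ),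
      (∀ i ≤ ℓ, d ≤ c i ∧ c i ≤ q + d - 1) ∧
      x = ∑ i ∈ Finset.range (ℓ + 1), c i * q ^ i := by
  have hdge : -q + 2 ≤ d := by omega
  suffices h : ∀ n : ℕ, ∀ x : ℤ, x.natAbs = n →
      ∃ (ℓ : ℕ) (c : ℕ → ℤ),
        (∀ i ≤ ℓ, d ≤ c i ∧ c i ≤ q + d - 1) ∧
        x = ∑ i ∈ Finset.range (ℓ + 1), c i * q ^ i from h x.natAbs x rfl
  intro n
  induction n using Nat.strong_induction_on with
  | _ n ih =>
    intro x hn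
    by_cases hx0 : x = 0
    · refine ⟨0, fun _ => 0, fun i _ => ⟨hd2, show (0:ℤ) ≤ q + d - 1 by omega⟩, ?_⟩
      simp [hx0]
    · have hq0 : (0:ℤ) < q := by omega
      set r : ℤ := d + (x - d) % q with hr
      have h1 : 0 ≤ (x - d) % q := Int.emod_nonneg _ (by omega)
      have h2 : (x - d) % q < q := Int.emod_lt_of_pos _ hq0
      set y : ℤ := (x - d) / q with hy
      have hxy : x = r + q * y := by
        have h := Int.mul_ediv_add_emod (x - d) q
        rw [← hy] at h
        omega
      -- |y| < |x|
      have habs : |y| < |x| := by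
        have h3 : q * |y| = |x - r| := by
          have : x - r = q * y := by omega
          rw [this, abs_mul, abs_of_pos hq0]
        have h4 : |x - r| ≤ |x| + (q - 2) := by
          calc |x - r| ≤ |x| + |r| := abs_sub _ _
            _ ≤ |x| + (q - 2) := by
                have : |r| ≤ q - 2 := abs_le.mpr ⟨by omega, by omega⟩
                omega
        have h5 : 1 ≤ |x| := by
          have := abs_pos.mpr hx0; omega
        by_contra h
        push_neg at h
        have h6 : q * |x| ≤ q * |y| := by
          exact mul_le_mul_of_nonneg_left h (by omega)
        nlinarith
      have hnat : y.natAbs < n := by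
        rw [← hn]
        rw [Int.abs_eq_natAbs, Int.abs_eq_natAbs] at habs
        exact_mod_cast habs
      obtain ⟨ℓ, c, hc, hsum⟩ := ih y.natAbs hnat y rfl
      refine ⟨ℓ + 1, fun i => if i = 0 then r else c (i - 1), ?_, ?_⟩
      · intro i hi
        by_cases h : i = 0
        · simp [h]; omega
        · simp only [h, if_false]
          exact hc (i - 1) (by omega)
      · rw [Finset.sum_range_succ']
        simp only [Nat.add_sub_cancel, Nat.succ_ne_zero, if_false, if_true, reduceIte,
          pow_zero, mul_one]
        have : ∀ i ∈ Finset.range (ℓ + 1), c i * q ^ (i + 1) = q * (c i * q ^ i) := by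
          intro i _; ring
        rw [Finset.sum_congr rfl this, ← Finset.mul_sum, ← hsum]
        omega
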